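/- Let A ∈ ℝ^{n×n} (or ℂ^{n×n}) and let l, p, r > 1 be integers with n = lpr. If A ≠ 0 admits both an (l, pr) factorization A = A₁ ⊗ A₂ and a (pl, r) factorization A = Â₁ ⊗ Â₂, then there exist matrices L ∈ ℝ^{l×l}, P ∈ ℝ^{p×p}, R ∈ ℝ^{r×r} such that A = L ⊗ P ⊗ R. -/
import Mathlib


namespace KronPaper

/-- Kronecker product of square real matrices. -/
def kronR {m n : ℕ} (A : Matrix (Fin m) (Fin m) ℝ) (B : Matrix (Fin n) (Fin n) ℝ) :
    Matrix (Fin (m * n)) (Fin (m * n)) ℝ :=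
  Matrix.of fun i j => by
    have hn : 0 < n := by
      rcases Nat.eq_zero_or_pos n with h | h
      · exact absurd i.isLt (by simp [h])
      · exact h
    exact
      A ⟨i.val / n, Nat.div_lt_of_lt_mul (lt_of_lt_of_eq i.isLt (mul_comm m n))⟩
        ⟨j.val / n, Nat.div_lt_of_lt_mul (lt_of_lt_of_eq j.isLt (mul_comm m n))⟩
      * B ⟨i.val % n, Nat.mod_lt _ hn⟩ ⟨j.val % n, Nat.mod_lt _ hn⟩

/-- Cast a square real matrix along an equality of sizes. -/
def castR {m n : ℕ} (h : m = n) (M : Matrix (Fin m) (Fin m) ℝ) :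
    Matrix (Fin n) (Fin n) ℝ :=
  Matrix.reindex (finCongr h) (finCongr h) M

/-- for real matrices, a nonzero `A` admitting both an `(l, pr)` and a
`(pl, r)` factorization admits an `(l, p, r)` factorization. -/
theorem two_factorizations_to_three_real (l p r : ℕ) (hl : 1 < l) (hp : 1 < p) (hr : 1 < r)
    (A : Matrix (Fin (l * p * r)) (Fin (l * p * r)) ℝ) (hA : A ≠ 0)
    (h₁ : ∃ (A₁ : Matrix (Fin l) (Fin l) ℝ) (A₂ : Matrix (Fin (p * r)) (Fin (p * r)) ℝ),
        A = castR (mul_assoc l p r).symm (kronR A₁ A₂))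
    (h₂ : ∃ (B₁ : Matrix (Fin (p * l)) (Fin (p * l)) ℝ) (B₂ : Matrix (Fin r) (Fin r) ℝ),
        A = castR (show p * l * r = l * p * r by ring) (kronR B₁ B₂)) :
    ∃ (L : Matrix (Fin l) (Fin l) ℝ) (P : Matrix (Fin p) (Fin p) ℝ)
      (R : Matrix (Fin r) (Fin r) ℝ), A = kronR (kronR L P) R := by
  obtain ⟨A₁, A₂, hA1⟩ := h₁
  obtain ⟨B₁, B₂, hB1⟩ := h₂
  have hl0 : 0 < l := by omega
  have hp0 : 0 < p := by omega
  have hr0 : 0 < r := by omega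
  have hpr : 0 < p * r := Nat.mul_pos hp0 hr0
  have hDl : ∀ k : ℕ, k < l * p * r → k / (p * r) < l := fun k hk =>
    Nat.div_lt_of_lt_mul (by calc k < l * p * r := hk
                                _ = (p * r) * l := by ring)
  have hDr : ∀ k : ℕ, k < l * p * r → k / r < p * l := fun k hk =>
    Nat.div_lt_of_lt_mul (by calc k < l * p * r := hk
                                _ = r * (p * l) := by ring)
  -- entrywise formulas
  have e1 : ∀ i j : Fin (l * p * r), A i j =
      A₁ ⟨i.1 / (p * r), hDl i.1 i.isLt⟩ ⟨j.1 / (p * r), hDl j.1 j.isLt⟩ *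
      A₂ ⟨i.1 % (p * r), Nat.mod_lt _ hpr⟩ ⟨j.1 % (p * r), Nat.mod_lt _ hpr⟩ := by
    intro i j; rw [hA1]; rfl
  have e2 : ∀ i j : Fin (l * p * r), A i j =
      B₁ ⟨i.1 / r, hDr i.1 i.isLt⟩ ⟨j.1 / r, hDr j.1 j.isLt⟩ *
      B₂ ⟨i.1 % r, Nat.mod_lt _ hr0⟩ ⟨j.1 % r, Nat.mod_lt _ hr0⟩ := by
    intro i j; rw [hB1]; rfl
  obtain ⟨i₀, j₀, h0⟩ : ∃ i j, A i j ≠ 0 := by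
    by_contra hc
    push_neg at hc
    exact hA (by ext i j; simp [hc])
  set x₀ : ℕ := i₀.1 / (p * r) with hx₀def
  set y₀ : ℕ := j₀.1 / (p * r) with hy₀def
  have hx₀ : x₀ < l := hDl i₀.1 i₀.isLt
  have hy₀ : y₀ < l := hDl j₀.1 j₀.isLt
  set α : ℝ := A₁ ⟨x₀, hx₀⟩ ⟨y₀, hy₀⟩ with hαdef
  have hα : α ≠ 0 := by
    have := e1 i₀ j₀
    rw [this] at h0
    exact left_ne_zero_of_mul h0
  have hPidx : ∀ (x : ℕ), x < l → ∀ a : ℕ, a < p → x * p + a < p * l := by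
    intro x hx a ha
    calc x * p + a < x * p + p := by omega
    _ = (x + 1) * p := by ring
    _ ≤ l * p := Nat.mul_le_mul (by omega) (le_refl p)
    _ = p * l := mul_comm l p
  have hdivp : ∀ u : Fin (p * r), u.1 / r < p := fun u =>
    Nat.div_lt_of_lt_mul (by calc u.1 < p * r := u.isLt
                                 _ = r * p := mul_comm p r)
  set P : Matrix (Fin p) (Fin p) ℝ := Matrix.of fun a b =>
    α⁻¹ * B₁ ⟨x₀ * p + a.1, hPidx x₀ hx₀ a.1 a.isLt⟩ ⟨y₀ * p + b.1, hPidx y₀ hy₀ b.1 b.isLt⟩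
    with hPdef
  -- factorization of A₂
  have hA2 : ∀ u v : Fin (p * r), A₂ u v =
      α⁻¹ * B₁ ⟨x₀ * p + u.1 / r, hPidx x₀ hx₀ _ (hdivp u)⟩
               ⟨y₀ * p + v.1 / r, hPidx y₀ hy₀ _ (hdivp v)⟩ *
      B₂ ⟨u.1 % r, Nat.mod_lt _ hr0⟩ ⟨v.1 % r, Nat.mod_lt _ hr0⟩ := by
    intro u v
    have hI : (p * r) * x₀ + u.1 < l * p * r := by
      calc (p * r) * x₀ + u.1 < (p * r) * x₀ + p * r := by omega
      _ = (p * r) * (x₀ + 1) := by ring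
      _ ≤ (p * r) * l := Nat.mul_le_mul (le_refl _) (by omega)
      _ = l * p * r := by ring
    have hJ : (p * r) * y₀ + v.1 < l * p * r := by
      calc (p * r) * y₀ + v.1 < (p * r) * y₀ + p * r := by omega
      _ = (p * r) * (y₀ + 1) := by ring
      _ ≤ (p * r) * l := Nat.mul_le_mul (le_refl _) (by omega)
      _ = l * p * r := by ring
    have hk := (e1 ⟨(p * r) * x₀ + u.1, hI⟩ ⟨(p * r) * y₀ + v.1, hJ⟩).symm.trans
               (e2 ⟨(p * r) * x₀ + u.1, hI⟩ ⟨(p * r) * y₀ + v.1, hJ⟩)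
    have hd1 : ∀ (z w : ℕ), w < p * r → ((p * r) * z + w) / (p * r) = z := by
      intro z w hw
      rw [Nat.mul_add_div hpr, Nat.div_eq_of_lt hw, Nat.add_zero]
    have hm1 : ∀ (z w : ℕ), w < p * r → ((p * r) * z + w) % (p * r) = w := by
      intro z w hw
      rw [Nat.mul_add_mod]; exact Nat.mod_eq_of_lt hw
    have hd2 : ∀ (z w : ℕ), ((p * r) * z + w) / r = z * p + w / r := by
      intro z w
      rw [show (p * r) * z = r * (z * p) from by ring, Nat.mul_add_div hr0]
    have hm2 : ∀ (z w : ℕ), ((p * r) * z + w) % r = w % r := by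
      intro z w
      rw [show (p * r) * z = r * (z * p) from by ring, Nat.mul_add_mod]
    simp only [hd1 x₀ u.1 u.isLt, hd1 y₀ v.1 v.isLt, hm1 x₀ u.1 u.isLt, hm1 y₀ v.1 v.isLt,
      hd2, hm2, Fin.eta] at hk
    rw [← hαdef] at hk
    rw [mul_assoc, ← hk, inv_mul_cancel_left₀ hα]
  refine ⟨A₁, P, B₂, ?_⟩
  ext i j
  have pf1 : i.1 / r / p < l := Nat.div_lt_of_lt_mul (hDr i.1 i.isLt)
  have pf1' : j.1 / r / p < l := Nat.div_lt_of_lt_mul (hDr j.1 j.isLt)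
  have eR : kronR (kronR A₁ P) B₂ i j =
      A₁ ⟨i.1 / r / p, pf1⟩ ⟨j.1 / r / p, pf1'⟩ *
      (α⁻¹ * B₁ ⟨x₀ * p + i.1 / r % p, hPidx x₀ hx₀ _ (Nat.mod_lt _ hp0)⟩
               ⟨y₀ * p + j.1 / r % p, hPidx y₀ hy₀ _ (Nat.mod_lt _ hp0)⟩) *
      B₂ ⟨i.1 % r, Nat.mod_lt _ hr0⟩ ⟨j.1 % r, Nat.mod_lt _ hr0⟩ := rfl
  rw [eR, e1 i j, hA2]
  have n1 : ∀ k : ℕ, k / (p * r) = k / r / p := fun k => by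
    rw [Nat.div_div_eq_div_mul, mul_comm r p]
  have n2 : ∀ k : ℕ, k % (p * r) / r = k / r % p := fun k => by
    rw [mul_comm p r]; exact Nat.mod_mul_right_div_self k r p
  have n3 : ∀ k : ℕ, k % (p * r) % r = k % r := fun k =>
    Nat.mod_mod_of_dvd k (dvd_mul_left r p)
  simp only [n1, n2, n3]
  ring


end KronPaper
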